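/- In PSL(2,ℂ), the word x·y⁻¹·z·y⁻¹ equals the class of the parabolic matrix [[1, 1], [0, 1]]. -/

import Mathlib

/-!
Setup: `PSL(2,ℂ)` as the quotient of `SL(2,ℂ)` by its center, the constants
`u = (1+√5)/2`, `ω = (1+√(-3))/2 = (1+√3·i)/2`, and the generators of the
tetrahedral groups of Neumann–Reid.
-/

noncomputable section

abbrev SL2C := Matrix.SpecialLinearGroup (Fin 2) ℂ

/-- `PSL(2,ℂ)`, the quotient of `SL(2,ℂ)` by its center `{±I}`. -/
abbrev PSL2C := SL2C ⧸ Subgroup.center SL2C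

/-- The projection `SL(2,ℂ) → PSL(2,ℂ)`, `A ↦ [A]`. -/
def pr : SL2C →* PSL2C := QuotientGroup.mk' _

def u : ℂ := ((1 + Real.sqrt 5) / 2 : ℝ)
def ω : ℂ := (1 + Real.sqrt 3 * Complex.I) / 2

lemma u_ne : u ≠ 0 := Complex.ofReal_ne_zero.mpr (by positivity)

lemma ω_ne : ω ≠ 0 := by
  unfold ω
  intro h
  rw [div_eq_zero_iff] at h
  rcases h with h | h
  · have := congrArg Complex.re h
    simp at this
  · norm_num at h

def xSL : SL2C := ⟨!![u, -u⁻¹; u, 0], by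
  rw [Matrix.det_fin_two_of]; field_simp [u_ne]; ring⟩

def ySL : SL2C := ⟨!![0, ω * u⁻¹; -ω⁻¹ * u, 0], by
  rw [Matrix.det_fin_two_of]; field_simp [u_ne, ω_ne]; ring⟩

def zSL : SL2C := ⟨!![0, ω ^ 2 * u⁻¹; -(ω ^ 2)⁻¹ * u, 0], by
  rw [Matrix.det_fin_two_of]; field_simp [u_ne, ω_ne]; ring⟩

def x : PSL2C := pr xSL
def y : PSL2C := pr ySL
def z : PSL2C := pr zSL

lemma hu2 : u ^ 2 = u + 1 := by
  have h5 : Real.sqrt 5 ^ 2 = 5 := Real.sq_sqrt (by norm_num)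
  have : ((1 + Real.sqrt 5) / 2 : ℝ) ^ 2 = (1 + Real.sqrt 5) / 2 + 1 := by nlinarith
  unfold u
  rw [← Complex.ofReal_pow, this]
  push_cast
  ring

lemma hw2 : ω ^ 2 = ω - 1 := by
  have hs : (Real.sqrt 3 : ℂ) ^ 2 = 3 := by
    rw [← Complex.ofReal_pow, Real.sq_sqrt (by norm_num : (3:ℝ) ≥ 0).le]
    norm_num
  have hI : Complex.I ^ 2 = -1 := Complex.I_sq
  unfold ω
  linear_combination (Complex.I ^ 2 / 4) * hs + (3 / 4) * hI

lemma hu_inv : u⁻¹ = u - 1 := by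
  field_simp [u_ne]
  linear_combination -hu2

lemma hw_inv : ω⁻¹ = 1 - ω := by
  field_simp [ω_ne]
  linear_combination hw2

lemma hw2_inv : (ω ^ 2)⁻¹ = -ω :=
  inv_eq_of_mul_eq_one_right (by linear_combination (-(ω + 1)) * hw2)

def cSL : SL2C := ⟨(-1 : Matrix (Fin 2) (Fin 2) ℂ), by
  simp [Matrix.det_neg, Fintype.card_fin]⟩

lemma cSL_center : cSL ∈ Subgroup.center SL2C := by
  rw [Subgroup.mem_center_iff]
  intro g
  apply Subtype.ext
  rw [Matrix.SpecialLinearGroup.coe_mul, Matrix.SpecialLinearGroup.coe_mul]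
  simp [cSL]

lemma ySL_inv_coe :
    ((ySL⁻¹ : SL2C) : Matrix (Fin 2) (Fin 2) ℂ) = !![0, -(ω * u⁻¹); ω⁻¹ * u, 0] := by
  rw [Matrix.SpecialLinearGroup.coe_inv]
  show Matrix.adjugate (!![0, ω * u⁻¹; -ω⁻¹ * u, 0]) = _
  rw [Matrix.adjugate_fin_two_of]
  norm_num

lemma key : xSL * ySL⁻¹ * zSL * ySL⁻¹
    = cSL * ⟨!![1, 1; 0, 1], by simp [Matrix.det_fin_two_of]⟩ := by
  apply Subtype.ext
  erw [Matrix.SpecialLinearGroup.coe_mul, Matrix.SpecialLinearGroup.coe_mul,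
    Matrix.SpecialLinearGroup.coe_mul, Matrix.SpecialLinearGroup.coe_mul, ySL_inv_coe]
  show (!![u, -u⁻¹; u, 0] * _ * !![0, ω ^ 2 * u⁻¹; -(ω ^ 2)⁻¹ * u, 0] * _ : Matrix (Fin 2) (Fin 2) ℂ)
      = (-1 : Matrix (Fin 2) (Fin 2) ℂ) * !![1, 1; 0, 1]
  rw [hu_inv, hw_inv, hw2_inv]
  ext i j
  fin_cases i <;> fin_cases j <;>
    simp [Matrix.mul_apply, Fin.sum_univ_two, Matrix.neg_apply]
  · linear_combination (-1 + u - u^2) * hu2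
      + (u^2 + u^2*ω - u^2*ω^2 - 2*u^3 - 2*u^3*ω + 2*u^3*ω^2 + u^4 + u^4*ω - u^4*ω^2) * hw2
  · linear_combination (-1 + u - u^2) * hu2
      + (u^2 + u^2*ω - 2*u^3 - 2*u^3*ω + u^4 + u^4*ω) * hw2
  · linear_combination (-1 + u - u^2) * hu2
      + (u^2 + u^2*ω - 2*u^3 - 2*u^3*ω + u^4 + u^4*ω) * hw2

/-- The word `x·y⁻¹·z·y⁻¹` is the parabolic `[[1,1],[0,1]]`. -/
theorem stmt3 :
    x * y⁻¹ * z * y⁻¹ = pr ⟨!![1, 1; 0, 1], by simp [Matrix.det_fin_two_of]⟩ := by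
  show pr xSL * (pr ySL)⁻¹ * pr zSL * (pr ySL)⁻¹ = _
  have h1 : pr cSL = 1 := (QuotientGroup.eq_one_iff cSL).mpr cSL_center
  rw [← map_inv, ← map_mul, ← map_mul, ← map_mul, key]
  erw [map_mul pr cSL]
  rw [h1, one_mul]
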